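/- Shift invariance of the wrap-around discrepancy for lattice-based Latin hypercube designs: let d ≥ 1 and n ≥ 1 be integers, let v ∈ ℤ^d have every entry coprime to n, and let δ, δ̃ ∈ ℤ^d. Then c_WD(L(n,v,δ)) = c_WD(L(n,v,δ̃)); that is, the wrap-around discrepancy of L(n,v,δ) does not depend on the shift vector δ. -/

import Mathlib

open Finset

/-- Distance from a real number to the nearest integer: w(t) = min over z in ZZ of |t - z|. -/
noncomputable def nid (t : ℝ) : ℝ := ⨅ z : ℤ, |t - (z : ℝ)|

/-- Wrap-around distance on ℝ^d. -/
noncomputable def wdist {d : ℕ} (u : Fin d → ℝ) : ℝ := Real.sqrt (∑ k, nid (u k) ^ 2)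

/-- Lattice-based Latin hypercube design
L(n,v,δ) = { z + i·v/n + δ/n + 1_d/(2n) : z ∈ ℤ^d, i ∈ ℤ } ∩ [0,1]^d. -/
def LHDset (d n : ℕ) (v : Fin d → ℤ) (δ : Fin d → ℝ) : Set (Fin d → ℝ) :=
  {x | (∃ (z : Fin d → ℤ) (i : ℤ),
          x = fun k => (z k : ℝ) + (i : ℝ) * (v k : ℝ) / n + δ k / n + 1 / (2 * n)) ∧
       ∀ k, x k ∈ Set.Icc (0 : ℝ) 1}

lemma nid_add_int (t : ℝ) (m : ℤ) : nid (t + m) = nid t := by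
  unfold nid
  rw [iInf, iInf]
  congr 1
  have h : (fun z : ℤ => |t + (m:ℝ) - (z : ℝ)|) = (fun z : ℤ => |t - (z : ℝ)|) ∘ (fun z : ℤ => z - m) := by
    funext z
    simp only [Function.comp]
    push_cast
    ring_nf
  have hs : Function.Surjective (fun z : ℤ => z - m) := fun y => ⟨y + m, by ring⟩
  rw [h, Set.range_comp, hs.range_eq, Set.image_univ]

/-- The canonical points of the lattice design. -/
noncomputable def pt (n : ℕ) {d : ℕ} (v δ : Fin d → ℤ) (i : ℤ) : Fin d → ℝ :=
  fun k => (((i * v k + δ k) % (n : ℤ) : ℤ) : ℝ) / n + 1 / (2 * n)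

lemma LHD_eq_range {d n : ℕ} (hn : 1 ≤ n) (v δ : Fin d → ℤ) :
    LHDset d n v (fun k => (δ k : ℝ)) = Set.range (fun i : Fin n => pt n v δ (i : ℤ)) := by
  have hn0 : (0:ℤ) < (n:ℤ) := by exact_mod_cast hn
  have hnR : (0:ℝ) < (n:ℝ) := by exact_mod_cast hn
  ext x
  constructor
  · rintro ⟨⟨z, i, rfl⟩, hb⟩
    have hmod : 0 ≤ i % (n:ℤ) := Int.emod_nonneg i (by positivity)
    have hmodlt : i % (n:ℤ) < n := Int.emod_lt_of_pos i hn0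
    refine ⟨⟨(i % (n:ℤ)).toNat, ?_⟩, ?_⟩
    · exact_mod_cast (Int.toNat_lt' (by omega)).mpr (by omega)
    funext k
    set a : ℤ := i * v k + δ k with ha
    set m : ℤ := (n:ℤ) * z k + a with hm
    have hxk : (z k : ℝ) + (i : ℝ) * (v k : ℝ) / n + (δ k : ℝ) / n + 1 / (2 * n)
        = (m : ℝ) / n + 1 / (2 * n) := by
      simp only [hm, ha]
      push_cast
      field_simp
      ring
    have hb1 : (0:ℝ) ≤ (z k : ℝ) + (i : ℝ) * (v k : ℝ) / n + (δ k : ℝ) / n + 1 / (2 * n) := (hb k).1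
    have hb2 : (z k : ℝ) + (i : ℝ) * (v k : ℝ) / n + (δ k : ℝ) / n + 1 / (2 * n) ≤ 1 := (hb k).2
    rw [hxk] at hb1 hb2
    show pt n v δ (((i % (n:ℤ)).toNat : ℕ) : ℤ) k
        = (z k : ℝ) + (i : ℝ) * (v k : ℝ) / n + (δ k : ℝ) / n + 1 / (2 * n)
    rw [hxk]
    have e1 : ((m:ℝ)/n + 1/(2*n)) * n = (m:ℝ) + 1/2 := by field_simp
    have hR1 : (0:ℝ) ≤ (m:ℝ) + 1/2 := by
      have := mul_le_mul_of_nonneg_right hb1 hnR.le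
      rw [zero_mul, e1] at this
      linarith
    have hR2 : (m:ℝ) + 1/2 ≤ (n:ℝ) := by
      have := mul_le_mul_of_nonneg_right hb2 hnR.le
      rw [one_mul, e1] at this
      linarith
    have hm0 : 0 ≤ m := by
      have h' : (-1:ℤ) < m := by exact_mod_cast (show ((-1:ℤ):ℝ) < (m:ℝ) by push_cast; linarith)
      omega
    have hmlt : m < n := by
      exact_mod_cast (show (m:ℝ) < ((n:ℤ):ℝ) by push_cast; linarith)
    have key : ((((i % (n:ℤ)).toNat : ℤ)) * v k + δ k) % (n:ℤ) = m := by
      have h1 : (((i % (n:ℤ)).toNat : ℤ)) = i % (n:ℤ) := Int.toNat_of_nonneg hmod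
      have h2 : ((((i % (n:ℤ)).toNat : ℤ)) * v k + δ k) % (n:ℤ) = m % (n:ℤ) := by
        rw [h1]
        have hi : i % (n:ℤ) ≡ i [ZMOD (n:ℤ)] := Int.emod_emod_of_dvd i dvd_rfl
        have c1 : (i % (n:ℤ)) * v k + δ k ≡ i * v k + δ k [ZMOD (n:ℤ)] :=
          Int.ModEq.add_right _ (Int.ModEq.mul_right _ hi)
        have hmm : m % (n:ℤ) = a % (n:ℤ) := by
          rw [hm, add_comm]
          exact Int.add_mul_emod_self_left ..
        exact c1.trans (hmm.symm : a ≡ m [ZMOD (n:ℤ)])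
      rw [h2, Int.emod_eq_of_lt hm0 hmlt]
    simp only [pt, key]
  · rintro ⟨i, rfl⟩
    constructor
    · refine ⟨fun k => -(((i : ℤ) * v k + δ k) / (n:ℤ)), (i : ℤ), ?_⟩
      funext k
      simp only [pt, Int.emod_def]
      push_cast
      field_simp
      ring
    · intro k
      have hmod : 0 ≤ ((i : ℤ) * v k + δ k) % (n:ℤ) := Int.emod_nonneg _ (by positivity)
      have hmodlt : ((i : ℤ) * v k + δ k) % (n:ℤ) < n := Int.emod_lt_of_pos _ hn0
      have h1 : (0:ℝ) ≤ ((((i : ℤ) * v k + δ k) % (n:ℤ) : ℤ) : ℝ) := by exact_mod_cast hmod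
      have h2 : ((((i : ℤ) * v k + δ k) % (n:ℤ) : ℤ) : ℝ) ≤ (n:ℝ) - 1 := by
        have : ((i : ℤ) * v k + δ k) % (n:ℤ) ≤ (n:ℤ) - 1 := by omega
        exact_mod_cast this
      constructor
      · simp only [pt]; positivity
      · simp only [pt]
        rw [div_add_div _ _ (ne_of_gt hnR) (by positivity), div_le_one (by positivity)]
        nlinarith

lemma pt_inj {d n : ℕ} (hd : 1 ≤ d) (hn : 1 ≤ n) (v δ : Fin d → ℤ)
    (hco : ∀ k, IsCoprime (v k) (n : ℤ)) :
    Function.Injective (fun i : Fin n => pt n v δ (i : ℤ)) := by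
  have hn0 : (0:ℤ) < (n:ℤ) := by exact_mod_cast hn
  have hnR : (0:ℝ) < (n:ℝ) := by exact_mod_cast hn
  intro i j hij
  let k0 : Fin d := ⟨0, hd⟩
  have h := congrFun hij k0
  simp only [pt] at h
  have h3 : ((i:ℤ) * v k0 + δ k0) % (n:ℤ) = ((j:ℤ) * v k0 + δ k0) % (n:ℤ) := by
    field_simp at h
    have h' : ((i:ℤ) * v k0 + δ k0) % (n:ℤ) * 2 + 1 = 2 * (((j:ℤ) * v k0 + δ k0) % (n:ℤ)) + 1 := by
      exact_mod_cast h
    linarith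
  have hdvd : (n:ℤ) ∣ ((i:ℤ) - (j:ℤ)) * v k0 := by
    have := Int.ModEq.dvd h3
    have heq : ((j:ℤ) * v k0 + δ k0) - ((i:ℤ) * v k0 + δ k0) = ((j:ℤ) - (i:ℤ)) * v k0 := by ring
    rw [heq] at this
    have hre : ((i:ℤ) - (j:ℤ)) * v k0 = -(((j:ℤ) - (i:ℤ)) * v k0) := by ring
    rw [hre]
    exact dvd_neg.mpr this
  have hdvd2 : (n:ℤ) ∣ ((i:ℤ) - (j:ℤ)) := ((hco k0).symm).dvd_of_dvd_mul_right hdvd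
  have habs : |((i:ℤ) - (j:ℤ))| < (n:ℤ) := by
    have hi : (i:ℤ) < n := by exact_mod_cast i.isLt
    have hj : (j:ℤ) < n := by exact_mod_cast j.isLt
    have hi0 : (0:ℤ) ≤ (i:ℤ) := by positivity
    have hj0 : (0:ℤ) ≤ (j:ℤ) := by positivity
    rw [abs_lt]; omega
  have : ((i:ℤ) - (j:ℤ)) = 0 := Int.eq_zero_of_abs_lt_dvd hdvd2 habs
  have : (i:ℤ) = (j:ℤ) := by omega
  exact Fin.ext (by exact_mod_cast this)

lemma pt_nid {d n : ℕ} (hn : 1 ≤ n) (v δ : Fin d → ℤ) (i j : ℤ) (k : Fin d) :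
    nid (pt n v δ i k - pt n v δ j k + 1 / 2)
      = nid ((((i - j) * v k : ℤ) : ℝ) / n + 1 / 2) := by
  have hnR : (0:ℝ) < (n:ℝ) := by exact_mod_cast hn
  set a : ℤ := i * v k + δ k
  set b : ℤ := j * v k + δ k
  have key : pt n v δ i k - pt n v δ j k + 1 / 2
      = (((i - j) * v k : ℤ) : ℝ) / n + 1 / 2 + ((b / (n:ℤ) - a / (n:ℤ) : ℤ) : ℝ) := by
    simp only [pt, Int.emod_def, a, b]
    push_cast
    field_simp
    ring
  rw [key, nid_add_int]

theorem stmt_8 (d n : ℕ) (hd : 1 ≤ d) (hn : 1 ≤ n) (v δ δ' : Fin d → ℤ)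
    (hco : ∀ k, IsCoprime (v k) (n : ℤ))
    (S S' : Set (Fin d → ℝ))
    (hS : S = LHDset d n v (fun k => (δ k : ℝ)))
    (hS' : S' = LHDset d n v (fun k => (δ' k : ℝ))) :
    Real.sqrt ((1 / (n : ℝ) ^ 2) * (∑ᶠ x ∈ S, ∑ᶠ y ∈ S,
        ∏ k, ((1.25 : ℝ) + nid (x k - y k + 1 / 2) ^ 2)) - (4 / 3 : ℝ) ^ d)
      = Real.sqrt ((1 / (n : ℝ) ^ 2) * (∑ᶠ x ∈ S', ∑ᶠ y ∈ S',
        ∏ k, ((1.25 : ℝ) + nid (x k - y k + 1 / 2) ^ 2)) - (4 / 3 : ℝ) ^ d) := by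
  have hsum : ∀ ε : Fin d → ℤ,
      (∑ᶠ x ∈ LHDset d n v (fun k => (ε k : ℝ)), ∑ᶠ y ∈ LHDset d n v (fun k => (ε k : ℝ)),
        ∏ k, ((1.25 : ℝ) + nid (x k - y k + 1 / 2) ^ 2))
      = ∑ i : Fin n, ∑ j : Fin n,
        ∏ k, ((1.25 : ℝ) + nid ((((((i:ℤ) - (j:ℤ)) * v k : ℤ)) : ℝ) / n + 1 / 2) ^ 2) := by
    intro ε
    rw [LHD_eq_range hn v ε]
    rw [finsum_mem_range (pt_inj hd hn v ε hco)]
    rw [finsum_eq_sum_of_fintype]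
    refine Finset.sum_congr rfl fun i _ => ?_
    rw [finsum_mem_range (pt_inj hd hn v ε hco)]
    rw [finsum_eq_sum_of_fintype]
    refine Finset.sum_congr rfl fun j _ => ?_
    refine Finset.prod_congr rfl fun k _ => ?_
    rw [pt_nid hn v ε]
  rw [hS, hS', hsum δ, hsum δ']
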